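/- A preteam ({H_a : a ∈ A}, H) is a strict team if and only if for every a ∈ A and every hyperedge e of H_a, the set e is connected in H. -/

import Mathlib

/-! Basic hypergraph notions (following Došen–Petrić / Curien–Obradović–Ivanović). -/

variable {α : Type*}

/-- `ConnIn E X`: the restriction of the edge set `E` to `X` is connected, i.e. every
nontrivial partition of `X` is crossed by an edge of `E` lying inside `X`. -/
def ConnIn (E : Set (Set α)) (X : Set α) : Prop :=
  ∀ X₁ X₂ : Set α, X₁ ∪ X₂ = X → Disjoint X₁ X₂ → X₁.Nonempty → X₂.Nonempty →
    ∃ e ∈ E, e ⊆ X ∧ ¬ e ⊆ X₁ ∧ ¬ e ⊆ X₂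

/-- An atomic hypergraph: a carrier set together with a set of nonempty hyperedges covering
the carrier and containing all singletons. -/
structure AHypergraph (α : Type*) where
  carrier : Set α
  edges : Set (Set α)
  edges_nonempty : ∀ e ∈ edges, e.Nonempty
  edges_sub : ∀ e ∈ edges, e ⊆ carrier
  atomic : ∀ x ∈ carrier, {x} ∈ edges

/-- A subset `X` is connected in the hypergraph `G`. -/
def AHypergraph.ConnectedIn (G : AHypergraph α) (X : Set α) : Prop := ConnIn G.edges X

/-- The hypergraph `G` is connected. -/
def AHypergraph.Connected (G : AHypergraph α) : Prop := G.ConnectedIn G.carrier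

/-- Restriction of a hypergraph to a subset. -/
def AHypergraph.restrict (G : AHypergraph α) (X : Set α) : AHypergraph α where
  carrier := G.carrier ∩ X
  edges := {e | e ∈ G.edges ∧ e ⊆ X}
  edges_nonempty := fun e he => G.edges_nonempty e he.1
  edges_sub := fun e he => Set.subset_inter (G.edges_sub e he.1) he.2
  atomic := fun x hx => ⟨G.atomic x hx.1, Set.singleton_subset_iff.2 hx.2⟩

/-- `Y` is a connected component of the hypergraph `G`: a maximal nonempty connected subset
of the carrier. -/
def IsCC (G : AHypergraph α) (Y : Set α) : Prop :=
  Y.Nonempty ∧ Y ⊆ G.carrier ∧ G.ConnectedIn Y ∧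
    ∀ Z, Y ⊆ Z → Z ⊆ G.carrier → G.ConnectedIn Z → Z = Y

/-- A preteam: a finite family of pairwise disjoint connected participating hypergraphs
whose carriers partition the carrier of a connected coordinating hypergraph. -/
structure Preteam (α : Type*) (A : Type*) where
  part : A → AHypergraph α
  coord : AHypergraph α
  finite : coord.carrier.Finite
  part_connected : ∀ a, (part a).Connected
  coord_connected : coord.Connected
  part_nonempty : ∀ a, (part a).carrier.Nonempty
  disj : Pairwise fun a b => Disjoint (part a).carrier (part b).carrier
  union : (⋃ a, (part a).carrier) = coord.carrier

/-- The coordinating hypergraph with the roots `⋃_{b ∈ B} X b` removed. -/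
def Preteam.removed {α A : Type*} (τ : Preteam α A) (B : Set A) (X : A → Set α) :
    AHypergraph α :=
  τ.coord.restrict (τ.coord.carrier \ ⋃ b ∈ B, X b)

/-- A preteam is a strict team if, for each nonempty `B ⊆ A` and nonempty `X b ⊆ H_b`
(`b ∈ B`), the carrier of each participating hypergraph with `a ∉ B`, and each connected
component of `H_b` minus `X b` (`b ∈ B`), is included in a single connected component of the
coordinating hypergraph minus `⋃_{b ∈ B} X b`. -/
def Preteam.IsStrictTeam {α A : Type*} (τ : Preteam α A) : Prop :=
  ∀ (B : Set A) (X : A → Set α), B.Nonempty →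
    (∀ b ∈ B, (X b).Nonempty ∧ X b ⊆ (τ.part b).carrier) →
    (∀ a ∉ B, ∃ Y, IsCC (τ.removed B X) Y ∧ (τ.part a).carrier ⊆ Y) ∧
    (∀ b ∈ B, ∀ C, IsCC ((τ.part b).restrict ((τ.part b).carrier \ X b)) C →
      ∃ Y, IsCC (τ.removed B X) Y ∧ C ⊆ Y)

/-- Monotonicity of `ConnIn` in the edge set (relativized form). -/
lemma connIn_mono {E F : Set (Set α)} {S : Set α} (h : ConnIn E S)
    (hEF : ∀ e ∈ E, e ⊆ S → e ∈ F) : ConnIn F S := by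
  intro X₁ X₂ hu hd h1 h2
  obtain ⟨e, he, hes, h1', h2'⟩ := h X₁ X₂ hu hd h1 h2
  exact ⟨e, hEF e he hes, hes, h1', h2'⟩

/-- If `S` is connected w.r.t. `E` and every `E`-edge inside `S` is connected w.r.t. `F`,
then `S` is connected w.r.t. `F`. -/
lemma connIn_trans {E F : Set (Set α)} {S : Set α} (h : ConnIn E S)
    (hEF : ∀ e ∈ E, e ⊆ S → ConnIn F e) : ConnIn F S := by
  intro X₁ X₂ hu hd h1 h2
  obtain ⟨e, heE, heS, h1', h2'⟩ := h X₁ X₂ hu hd h1 h2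
  have hsub : e ⊆ X₁ ∪ X₂ := hu ▸ heS
  have e1 : (e ∩ X₁).Nonempty := by
    obtain ⟨x, hx, hx2⟩ := Set.not_subset.1 h2'
    exact ⟨x, hx, (hsub hx).resolve_right hx2⟩
  have e2 : (e ∩ X₂).Nonempty := by
    obtain ⟨x, hx, hx1⟩ := Set.not_subset.1 h1'
    exact ⟨x, hx, (hsub hx).resolve_left hx1⟩
  obtain ⟨f, hfF, hfe, hf1, hf2⟩ := hEF e heE heS (e ∩ X₁) (e ∩ X₂)
    (by rw [← Set.inter_union_distrib_left]; exact Set.inter_eq_left.2 hsub)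
    (hd.mono Set.inter_subset_right Set.inter_subset_right) e1 e2
  exact ⟨f, hfF, hfe.trans heS, fun h => hf1 (fun x hx => ⟨hfe hx, h hx⟩),
    fun h => hf2 (fun x hx => ⟨hfe hx, h hx⟩)⟩

/-- Every nonempty connected subset of a finite hypergraph extends to a connected
component. -/
lemma exists_cc (G : AHypergraph α) (hfin : G.carrier.Finite) {S : Set α}
    (hne : S.Nonempty) (hsub : S ⊆ G.carrier) (hconn : G.ConnectedIn S) :
    ∃ Y, IsCC G Y ∧ S ⊆ Y := by
  have hfinS : {Z : Set α | S ⊆ Z ∧ Z ⊆ G.carrier ∧ G.ConnectedIn Z}.Finite :=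
    hfin.finite_subsets.subset fun Z hZ => hZ.2.1
  obtain ⟨Y, hY, hmax⟩ := Set.Finite.exists_maximalFor id _ hfinS ⟨S, le_refl S, hsub, hconn⟩
  refine ⟨Y, ⟨hne.mono hY.1, hY.2.1, hY.2.2, fun Z hYZ hZc hZconn => ?_⟩, hY.1⟩
  exact Set.Subset.antisymm (hmax ⟨hY.1.trans hYZ, hZc, hZconn⟩ hYZ) hYZ

/-- A preteam is a strict team if and only if every hyperedge of every participating
hypergraph is connected in the coordinating hypergraph. -/
theorem stmt6 {α A : Type*} (τ : Preteam α A) :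
    τ.IsStrictTeam ↔ ∀ a, ∀ e ∈ (τ.part a).edges, τ.coord.ConnectedIn e := by
  constructor
  · -- strict team → every participant edge is connected in the coordinating hypergraph
    intro hst a e he
    have heHa : e ⊆ (τ.part a).carrier := (τ.part a).edges_sub e he
    have hene : e.Nonempty := (τ.part a).edges_nonempty e he
    have hecar : e ⊆ τ.coord.carrier := by
      refine heHa.trans ?_
      rw [← τ.union]; exact Set.subset_iUnion (fun b => (τ.part b).carrier) a
    set X : A → Set α := fun b => (τ.part b).carrier \ e with hX
    set B : Set A := {b | (X b).Nonempty} with hBdef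
    by_cases hB : B.Nonempty
    · have hXsub : ∀ b ∈ B, (X b).Nonempty ∧ X b ⊆ (τ.part b).carrier :=
        fun b hb => ⟨hb, Set.diff_subset⟩
      have key := hst B X hB hXsub
      -- compute the carrier left after removal: it is exactly `e`
      have hR : (⋃ b ∈ B, X b) = τ.coord.carrier \ e := by
        have : (⋃ b ∈ B, X b) = ⋃ b, X b := by
          apply Set.Subset.antisymm (Set.iUnion₂_subset fun b _ => Set.subset_iUnion X b)
          refine Set.iUnion_subset fun b => ?_
          by_cases hbB : b ∈ B
          · exact Set.subset_biUnion_of_mem hbB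
          · have : X b = ∅ := Set.not_nonempty_iff_eq_empty.1 hbB
            rw [this]; exact Set.empty_subset _
        rw [this, hX]
        simp only [← Set.iUnion_diff, τ.union]
      have hW : τ.coord.carrier \ ⋃ b ∈ B, X b = e := by
        rw [hR, Set.diff_diff_cancel_left hecar]
      have hremcar : (τ.removed B X).carrier = e := by
        show τ.coord.carrier ∩ _ = e
        rw [hW]; exact Set.inter_eq_right.2 hecar
      -- get Y, a CC of the removed hypergraph, containing `e`
      have hgetY : ∃ Y, IsCC (τ.removed B X) Y ∧ e ⊆ Y := by
        by_cases haB : a ∈ B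
        · -- `e` is connected in `part a` restricted to `H_a \ X a`
          set G' := (τ.part a).restrict ((τ.part a).carrier \ X a) with hG'
          have heW : e ⊆ (τ.part a).carrier \ X a :=
            fun x hx => ⟨heHa hx, fun h => h.2 hx⟩
          have heG' : e ⊆ G'.carrier := fun x hx => ⟨heHa hx, heW hx⟩
          have hconn : G'.ConnectedIn e := by
            intro X₁ X₂ hu hd h1 h2
            refine ⟨e, ⟨he, heW⟩, le_refl _, fun hs => ?_, fun hs => ?_⟩
            · obtain ⟨x, hx⟩ := h2
              exact hd.ne_of_mem (hs (hu ▸ Set.mem_union_right X₁ hx)) hx rfl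
            · obtain ⟨x, hx⟩ := h1
              exact hd.ne_of_mem hx (hs (hu ▸ Set.mem_union_left X₂ hx)) rfl
          have hfin' : G'.carrier.Finite := by
            refine τ.finite.subset ?_
            refine (Set.inter_subset_left).trans ?_
            rw [← τ.union]; exact Set.subset_iUnion (fun b => (τ.part b).carrier) a
          obtain ⟨C, hC, heC⟩ := exists_cc G' hfin' hene heG' hconn
          obtain ⟨Y, hY, hCY⟩ := key.2 a haB C hC
          exact ⟨Y, hY, heC.trans hCY⟩
        · obtain ⟨Y, hY, hHaY⟩ := key.1 a haB
          exact ⟨Y, hY, heHa.trans hHaY⟩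
      obtain ⟨Y, hY, heY⟩ := hgetY
      have hYe : Y = e := Set.Subset.antisymm (hremcar ▸ hY.2.1) heY
      have := hY.2.2.1
      rw [hYe] at this
      exact connIn_mono this fun f hf _ => hf.1
    · -- no part sticks out of `e`: then `e` is the whole coordinating carrier
      have hcc : τ.coord.carrier = e := by
        apply Set.Subset.antisymm _ hecar
        rw [← τ.union]
        refine Set.iUnion_subset fun b => ?_
        have : X b = ∅ := Set.not_nonempty_iff_eq_empty.1 fun h => hB ⟨b, h⟩
        rw [hX] at this
        exact Set.diff_eq_empty.1 this
      have := τ.coord_connected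
      rwa [AHypergraph.Connected, hcc] at this
  · -- edges connected → strict team
    intro hedges B X hB hX
    set G := τ.removed B X with hG
    have hGfin : G.carrier.Finite := τ.finite.subset Set.inter_subset_left
    -- points avoiding all the roots lie in the removed carrier
    have hmem : ∀ S : Set α, S ⊆ τ.coord.carrier → (∀ b ∈ B, Disjoint S (X b)) →
        S ⊆ G.carrier := by
      intro S hSc hSd x hx
      refine ⟨hSc hx, hSc hx, ?_⟩
      simp only [Set.mem_iUnion]
      rintro ⟨b, hb, hxb⟩
      exact (hSd b hb).ne_of_mem hx hxb rfl
    -- edges of participants inside the removed carrier are connected there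
    have hedge' : ∀ (b : A) (f : Set α), f ∈ (τ.part b).edges → f ⊆ G.carrier →
        ConnIn G.edges f := by
      intro b f hf hfc
      refine connIn_mono (hedges b f hf) fun g hg hgf => ⟨hg, ?_⟩
      exact (hgf.trans hfc).trans Set.inter_subset_right
    constructor
    · intro a ha
      have hac : (τ.part a).carrier ⊆ τ.coord.carrier := by
        rw [← τ.union]; exact Set.subset_iUnion (fun b => (τ.part b).carrier) a
      have hsub : (τ.part a).carrier ⊆ G.carrier := by
        refine hmem _ hac fun b hb => ?_
        exact (τ.disj fun h => ha (by rw [h]; exact hb)).mono_right (hX b hb).2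
      have hconn : ConnIn G.edges (τ.part a).carrier :=
        connIn_trans (τ.part_connected a) fun f hf hfs =>
          hedge' a f hf (hfs.trans hsub)
      obtain ⟨Y, hY, hsY⟩ := exists_cc G hGfin (τ.part_nonempty a) hsub hconn
      exact ⟨Y, hY, hsY⟩
    · intro b hb C hC
      obtain ⟨hCne, hCsub, hCconn, -⟩ := hC
      have hCsub' : C ⊆ (τ.part b).carrier \ X b :=
        hCsub.trans Set.inter_subset_right
      have hbc : (τ.part b).carrier ⊆ τ.coord.carrier := by
        rw [← τ.union]; exact Set.subset_iUnion (fun c => (τ.part c).carrier) b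
      have hsub : C ⊆ G.carrier := by
        refine hmem _ (hCsub'.trans (Set.diff_subset.trans hbc)) fun b' hb' => ?_
        by_cases hbb : b' = b
        · subst hbb
          exact Set.disjoint_right.2 fun x hx hxC => (hCsub' hxC).2 hx
        · have hd : Disjoint (τ.part b).carrier (τ.part b').carrier :=
            τ.disj fun h => hbb h.symm
          exact (hd.mono_left (hCsub'.trans Set.diff_subset)).mono_right (hX b' hb').2
      have hconn : ConnIn G.edges C :=
        connIn_trans hCconn fun f hf hfs => hedge' b f hf.1 (hfs.trans hsub)
      obtain ⟨Y, hY, hsY⟩ := exists_cc G hGfin hCne hsub hconn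
      exact ⟨Y, hY, hsY⟩
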